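/- Let (Ω, μ) be a σ-finite measure space and let f be a measurable function in L¹+L^∞(μ). Then ‖f‖_{1+∞} = ∫₀¹ f*(t) dt, where f* is the decreasing rearrangement of f. -/

import Mathlib

open MeasureTheory ENNReal

/-- The decreasing rearrangement `f*` of a measurable function `f`:
`f*(t) = inf { s ≥ 0 : μ(|f| > s) ≤ t }`. -/
noncomputable def decRearrange {Ω : Type*} [MeasurableSpace Ω]
    (μ : Measure Ω) (f : Ω → ℝ) (t : ℝ) : ℝ :=
  sInf {s : ℝ | 0 ≤ s ∧ μ {x | s < |f x|} ≤ ENNReal.ofReal t}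

section Aux

open Set

variable {Ω : Type*} [MeasurableSpace Ω] (μ : Measure Ω) (f : Ω → ℝ)

/-- The distribution function `s ↦ μ(|f| > s)`. -/
noncomputable def dfun (s : ℝ) : ℝ≥0∞ := μ {x | s < |f x|}

lemma dfun_antitone : Antitone (dfun μ f) := fun _ _ hab =>
  measure_mono fun _ hx => lt_of_le_of_lt hab hx

lemma dfun_measurable : Measurable (dfun μ f) := (dfun_antitone μ f).measurable

/-- The set whose infimum defines `decRearrange`, with a general `ℝ≥0∞` level. -/
def dSet (t : ℝ≥0∞) : Set ℝ := {s : ℝ | 0 ≤ s ∧ dfun μ f s ≤ t}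

lemma bddBelow_dSet (t : ℝ≥0∞) : BddBelow (dSet μ f t) := ⟨0, fun _ hs => hs.1⟩

lemma decRearrange_eq (t : ℝ) : decRearrange μ f t = sInf (dSet μ f (ENNReal.ofReal t)) := rfl

lemma decRearrange_nonneg (t : ℝ) : 0 ≤ decRearrange μ f t :=
  Real.sInf_nonneg fun _ hs => hs.1

/-- Closedness of the defining set: the distribution function at the infimum is still `≤ t`. -/
lemma dfun_sInf_le {t : ℝ≥0∞} (hne : (dSet μ f t).Nonempty) :
    dfun μ f (sInf (dSet μ f t)) ≤ t := by
  obtain ⟨u, hu_anti, hu_tend, hu_mem⟩ := exists_seq_tendsto_sInf hne (bddBelow_dSet μ f t)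
  have hset : {x | sInf (dSet μ f t) < |f x|} = ⋃ n, {x | u n < |f x|} := by
    ext x
    simp only [mem_setOf_eq, mem_iUnion]
    constructor
    · intro hx
      obtain ⟨n, hn⟩ := (hu_tend.eventually_lt_const hx).exists
      exact ⟨n, hn⟩
    · rintro ⟨n, hn⟩
      exact lt_of_le_of_lt (csInf_le (bddBelow_dSet μ f t) (hu_mem n)) hn
  have hdir : Directed (· ⊆ ·) fun n => {x : Ω | u n < |f x|} := by
    have hmono : Monotone fun n => {x : Ω | u n < |f x|} := fun m n hmn =>
      fun x hx => lt_of_le_of_lt (hu_anti hmn) hx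
    exact hmono.directed_le
  calc dfun μ f (sInf (dSet μ f t)) = μ (⋃ n, {x | u n < |f x|}) := by rw [dfun, hset]
    _ = ⨆ n, μ {x | u n < |f x|} := hdir.measure_iUnion
    _ ≤ t := iSup_le fun n => (hu_mem n).2

lemma sInf_dSet_le_iff {t : ℝ≥0∞} (hne : (dSet μ f t).Nonempty) {s : ℝ} (hs : 0 ≤ s) :
    sInf (dSet μ f t) ≤ s ↔ dfun μ f s ≤ t := by
  constructor
  · intro h
    exact (dfun_antitone μ f h).trans (dfun_sInf_le μ f hne)
  · intro h
    exact csInf_le (bddBelow_dSet μ f t) ⟨hs, h⟩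

/-- Markov-type nonemptiness: if `f ∈ L¹ + L^∞`, then for every `t > 0` some level has
distribution `≤ t`. -/
lemma dSet_nonempty
    (hdecomp : ∃ g h : Ω → ℝ, f = g + h ∧ Integrable g μ ∧ MemLp h ⊤ μ)
    {t : ℝ≥0∞} (ht : 0 < t) : (dSet μ f t).Nonempty := by
  obtain ⟨g, h, hfgh, hg, hh⟩ := hdecomp
  rcases eq_top_or_lt_top t with ht' | ht'
  · exact ⟨0, le_refl 0, by simp [ht']⟩
  set M : ℝ := (eLpNorm h ⊤ μ).toReal with hM
  have hM0 : 0 ≤ M := ENNReal.toReal_nonneg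
  have hhfin : eLpNorm h ⊤ μ ≠ ∞ := hh.2.ne
  have hhb : ∀ᵐ x ∂μ, |h x| ≤ M := by
    filter_upwards [ae_le_eLpNormEssSup (f := h) (μ := μ)] with x hx
    have : (‖h x‖₊ : ℝ≥0∞) ≤ eLpNorm h ⊤ μ := by
      rwa [eLpNorm_exponent_top]
    calc |h x| = ((‖h x‖₊ : ℝ≥0∞)).toReal := by simp [Real.norm_eq_abs]
      _ ≤ M := ENNReal.toReal_mono hhfin this
  set L : ℝ≥0∞ := ∫⁻ x, ENNReal.ofReal |g x| ∂μ with hL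
  have hLfin : L ≠ ∞ := by
    have h1 : (∫⁻ x, (‖g x‖₊ : ℝ≥0∞) ∂μ) < ∞ := hg.2
    have h2 : L = ∫⁻ x, (‖g x‖₊ : ℝ≥0∞) ∂μ := by
      rw [hL]; exact lintegral_congr fun x => (Real.enorm_eq_ofReal_abs (g x)).symm
    rw [h2]; exact h1.ne
  set s : ℝ := (L / t).toReal + 1 with hs
  have hs0 : 0 ≤ s := by positivity
  refine ⟨M + s, by positivity, ?_⟩
  have hsub : dfun μ f (M + s) ≤ μ {x | s < |g x|} := by
    apply measure_mono_ae
    filter_upwards [hhb] with x hx hfx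
    have : |f x| ≤ |g x| + M := by
      calc |f x| = |g x + h x| := by rw [hfgh]; rfl
        _ ≤ |g x| + |h x| := abs_add_le _ _
        _ ≤ |g x| + M := by linarith
    have hfx' : M + s < |f x| := hfx
    show s < |g x|
    linarith
  have hmarkov : ENNReal.ofReal s * μ {x | s < |g x|} ≤ L := by
    have hle : μ {x | s < |g x|} ≤ μ {x | ENNReal.ofReal s ≤ ENNReal.ofReal |g x|} := by
      apply measure_mono
      intro x hx
      exact ENNReal.ofReal_le_ofReal (le_of_lt hx)
    calc ENNReal.ofReal s * μ {x | s < |g x|}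
        ≤ ENNReal.ofReal s * μ {x | ENNReal.ofReal s ≤ ENNReal.ofReal |g x|} := by gcongr
      _ ≤ L := mul_meas_ge_le_lintegral₀
          (ENNReal.measurable_ofReal.comp_aemeasurable hg.abs.aemeasurable) _
  have hofs : ENNReal.ofReal s = L / t + 1 := by
    rw [hs, ENNReal.ofReal_add ENNReal.toReal_nonneg zero_le_one,
      ENNReal.ofReal_toReal (by
        exact (ENNReal.div_lt_top hLfin ht.ne').ne), ENNReal.ofReal_one]
  have hdiv : μ {x | s < |g x|} ≤ t := by
    by_contra hcon
    push_neg at hcon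
    have h1 : t * (L / t + 1) ≤ ENNReal.ofReal s * μ {x | s < |g x|} := by
      rw [hofs, mul_comm t]
      exact mul_le_mul' le_rfl hcon.le
    have h2 : t * (L / t + 1) = L + t := by
      rw [mul_add, mul_one, ENNReal.mul_div_cancel ht.ne' ht'.ne]
    have h3 : L + t ≤ L := h2 ▸ h1.trans hmarkov
    have : t = 0 := by
      by_contra ht0
      exact absurd h3 (by
        simp only [not_le]
        exact ENNReal.lt_add_right hLfin ht0)
    exact ht.ne' this
  exact hsub.trans hdiv


lemma meas_decRearrange_gt
    (hdecomp : ∃ g h : Ω → ℝ, f = g + h ∧ Integrable g μ ∧ MemLp h ⊤ μ)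
    {s : ℝ} (hs : 0 ≤ s) :
    volume ({t : ℝ | s < decRearrange μ f t} ∩ Ioc (0:ℝ) 1) = min (dfun μ f s) 1 := by
  set m : ℝ≥0∞ := min (dfun μ f s) 1 with hm
  have hmne : m ≠ ∞ := (lt_of_le_of_lt (min_le_right _ _) ENNReal.one_lt_top).ne
  have hm1 : m ≤ 1 := min_le_right _ _
  have hiff : ∀ t : ℝ, t ∈ Ioc (0:ℝ) 1 →
      (s < decRearrange μ f t ↔ ENNReal.ofReal t < dfun μ f s) := by
    intro t ht
    have hne := dSet_nonempty μ f hdecomp (t := ENNReal.ofReal t) (ENNReal.ofReal_pos.mpr ht.1)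
    rw [decRearrange_eq, lt_iff_not_ge, sInf_dSet_le_iff μ f hne hs, ← not_le]
  have hsub1 : {t : ℝ | s < decRearrange μ f t} ∩ Ioc (0:ℝ) 1 ⊆ Ioc 0 m.toReal := by
    rintro t ⟨hts, ht⟩
    have h2 := (hiff t ht).mp hts
    have h3 : ENNReal.ofReal t ≤ m := le_min h2.le (by
      calc ENNReal.ofReal t ≤ ENNReal.ofReal 1 := ENNReal.ofReal_le_ofReal ht.2
        _ = 1 := ENNReal.ofReal_one)
    exact ⟨ht.1, (ENNReal.ofReal_le_iff_le_toReal hmne).mp h3⟩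
  have hsub2 : Ioo (0:ℝ) m.toReal ⊆ {t : ℝ | s < decRearrange μ f t} ∩ Ioc (0:ℝ) 1 := by
    rintro t ⟨ht0, htm⟩
    have hmt1 : m.toReal ≤ 1 := by
      have := ENNReal.toReal_mono ENNReal.one_ne_top hm1
      simpa using this
    have htle1 : t ≤ 1 := le_trans htm.le hmt1
    refine ⟨?_, ht0, htle1⟩
    have h4 : ENNReal.ofReal t < m := (ENNReal.ofReal_lt_iff_lt_toReal ht0.le hmne).mpr htm
    exact (hiff t ⟨ht0, htle1⟩).mpr (lt_of_lt_of_le h4 (min_le_left _ _))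
  refine le_antisymm ?_ ?_
  · calc volume ({t : ℝ | s < decRearrange μ f t} ∩ Ioc (0:ℝ) 1)
        ≤ volume (Ioc (0:ℝ) m.toReal) := measure_mono hsub1
      _ = ENNReal.ofReal m.toReal := by rw [Real.volume_Ioc, sub_zero]
      _ = m := ENNReal.ofReal_toReal hmne
  · calc m = ENNReal.ofReal m.toReal := (ENNReal.ofReal_toReal hmne).symm
      _ = volume (Ioo (0:ℝ) m.toReal) := by rw [Real.volume_Ioo, sub_zero]
      _ ≤ volume ({t : ℝ | s < decRearrange μ f t} ∩ Ioc (0:ℝ) 1) := measure_mono hsub2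

lemma key_identity
    (hdecomp : ∃ g h : Ω → ℝ, f = g + h ∧ Integrable g μ ∧ MemLp h ⊤ μ) :
    ∫⁻ t in Ioc (0:ℝ) 1, ENNReal.ofReal (decRearrange μ f t)
      = ∫⁻ s in Ioi (0:ℝ), min (dfun μ f s) 1 := by
  have hanti : AntitoneOn (decRearrange μ f) (Ioc (0:ℝ) 1) := by
    intro t ht t' ht' htt'
    rw [decRearrange_eq, decRearrange_eq]
    exact csInf_le_csInf (bddBelow_dSet μ f _)
      (dSet_nonempty μ f hdecomp (ENNReal.ofReal_pos.mpr ht.1))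
      (fun x hx => ⟨hx.1, hx.2.trans (ENNReal.ofReal_le_ofReal htt')⟩)
  have hae : AEMeasurable (decRearrange μ f) (volume.restrict (Ioc (0:ℝ) 1)) :=
    aemeasurable_restrict_of_antitoneOn measurableSet_Ioc hanti
  rw [lintegral_eq_lintegral_meas_lt _ (ae_of_all _ fun t => decRearrange_nonneg μ f t) hae]
  refine setLIntegral_congr_fun measurableSet_Ioi (fun s hs => ?_)
  rw [Measure.restrict_apply' measurableSet_Ioc]
  exact meas_decRearrange_gt μ f hdecomp (le_of_lt hs)


lemma ae_abs_le_of_memTop {h : Ω → ℝ} (hh : MemLp h ⊤ μ) :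
    ∀ᵐ x ∂μ, |h x| ≤ (eLpNorm h ⊤ μ).toReal := by
  have hhfin : eLpNorm h ⊤ μ ≠ ∞ := hh.2.ne
  filter_upwards [ae_le_eLpNormEssSup (f := h) (μ := μ)] with x hx
  have hx' : (‖h x‖₊ : ℝ≥0∞) ≤ eLpNorm h ⊤ μ := by rwa [eLpNorm_exponent_top]
  calc |h x| = ((‖h x‖₊ : ℝ≥0∞)).toReal := by simp [Real.norm_eq_abs]
    _ ≤ (eLpNorm h ⊤ μ).toReal := ENNReal.toReal_mono hhfin hx'

lemma lower_bound {g h : Ω → ℝ} (hfgh : f = g + h) (hg : Integrable g μ)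
    (hh : MemLp h ⊤ μ) :
    (∫⁻ s in Ioi (0:ℝ), min (dfun μ f s) 1) ≤ eLpNorm g 1 μ + eLpNorm h ⊤ μ := by
  set M : ℝ := (eLpNorm h ⊤ μ).toReal with hM
  have hM0 : 0 ≤ M := ENNReal.toReal_nonneg
  have hhfin : eLpNorm h ⊤ μ ≠ ∞ := hh.2.ne
  have hMeq : ENNReal.ofReal M = eLpNorm h ⊤ μ := ENNReal.ofReal_toReal hhfin
  have hhb : ∀ᵐ x ∂μ, |h x| ≤ M := ae_abs_le_of_memTop μ hh
  have hsplit : (∫⁻ s in Ioi (0:ℝ), min (dfun μ f s) 1)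
      = (∫⁻ s in Ioc (0:ℝ) M, min (dfun μ f s) 1) + ∫⁻ s in Ioi M, min (dfun μ f s) 1 := by
    rw [← lintegral_union measurableSet_Ioi Set.Ioc_disjoint_Ioi_same,
      Set.Ioc_union_Ioi_eq_Ioi hM0]
  have hpart1 : (∫⁻ s in Ioc (0:ℝ) M, min (dfun μ f s) 1) ≤ ENNReal.ofReal M := by
    calc (∫⁻ s in Ioc (0:ℝ) M, min (dfun μ f s) 1)
        ≤ ∫⁻ _ in Ioc (0:ℝ) M, 1 := lintegral_mono fun s => min_le_right _ _
      _ = volume (Ioc (0:ℝ) M) := setLIntegral_one _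
      _ = ENNReal.ofReal M := by rw [Real.volume_Ioc, sub_zero]
  have hGmble : Measurable fun s : ℝ => dfun μ g (s - M) :=
    (dfun_measurable μ g).comp (measurable_id.sub measurable_const)
  have hpart2 : (∫⁻ s in Ioi M, min (dfun μ f s) 1) ≤ eLpNorm g 1 μ := by
    have h1 : (∫⁻ s in Ioi M, min (dfun μ f s) 1) ≤ ∫⁻ s in Ioi M, dfun μ g (s - M) := by
      refine setLIntegral_mono_ae hGmble.aemeasurable (ae_of_all _ fun s _ => ?_)
      refine (min_le_left _ _).trans ?_
      apply measure_mono_ae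
      filter_upwards [hhb] with x hx hfx
      have hfx' : s < |f x| := hfx
      have habs : |f x| ≤ |g x| + M := by
        calc |f x| = |g x + h x| := by rw [hfgh]; rfl
          _ ≤ |g x| + |h x| := abs_add_le _ _
          _ ≤ |g x| + M := by linarith
      show s - M < |g x|
      linarith
    have hpre : ((· + M) ⁻¹' Ioi M : Set ℝ) = Ioi 0 := by
      ext u; simp
    have hmap : volume.restrict (Ioi M) = Measure.map (· + M) (volume.restrict (Ioi (0:ℝ))) := by
      conv_lhs => rw [← map_add_right_eq_self volume M]
      rw [Measure.restrict_map (measurable_add_const M) measurableSet_Ioi, hpre]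
    have h2 : (∫⁻ s in Ioi M, dfun μ g (s - M)) = ∫⁻ u in Ioi (0:ℝ), dfun μ g u := by
      rw [hmap, lintegral_map hGmble (measurable_add_const M)]
      simp only [add_sub_cancel_right]
    have h3 : (∫⁻ u in Ioi (0:ℝ), dfun μ g u) = eLpNorm g 1 μ := by
      rw [eLpNorm_one_eq_lintegral_enorm,
        show (∫⁻ x, ‖g x‖ₑ ∂μ) = ∫⁻ x, ENNReal.ofReal |g x| ∂μ from
          lintegral_congr fun x => Real.enorm_eq_ofReal_abs (g x),
        lintegral_eq_lintegral_meas_lt μ (ae_of_all _ fun x => abs_nonneg (g x))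
          hg.abs.aemeasurable]
      rfl
    calc (∫⁻ s in Ioi M, min (dfun μ f s) 1) ≤ ∫⁻ s in Ioi M, dfun μ g (s - M) := h1
      _ = eLpNorm g 1 μ := h2.trans h3
  calc (∫⁻ s in Ioi (0:ℝ), min (dfun μ f s) 1)
      ≤ ENNReal.ofReal M + eLpNorm g 1 μ := hsplit ▸ add_le_add hpart1 hpart2
    _ = eLpNorm g 1 μ + eLpNorm h ⊤ μ := by rw [hMeq, add_comm]

end Aux

/-- For a σ-finite measure `μ` and `f ∈ L¹ + L^∞(μ)`,
`‖f‖_{1+∞} = inf { ‖g‖₁ + ‖h‖_∞ : f = g + h } = ∫₀¹ f*(t) dt`, where `f*` is the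
decreasing rearrangement of `f`. -/
theorem L1_plus_Linfty_norm_eq_integral_rearrangement
    {Ω : Type*} [MeasurableSpace Ω] (μ : Measure Ω) [SigmaFinite μ]
    (f : Ω → ℝ) (hmeas : Measurable f)
    (hdecomp : ∃ g h : Ω → ℝ, f = g + h ∧ Integrable g μ ∧ MemLp h ⊤ μ) :
    sInf {r : ℝ≥0∞ | ∃ g h : Ω → ℝ, f = g + h ∧ Integrable g μ ∧ MemLp h ⊤ μ ∧
        r = eLpNorm g 1 μ + eLpNorm h ⊤ μ} =
      ∫⁻ t in Set.Ioc (0:ℝ) 1, ENNReal.ofReal (decRearrange μ f t) := by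
  rw [key_identity μ f hdecomp]
  set RHS := ∫⁻ s in Set.Ioi (0:ℝ), min (dfun μ f s) 1 with hRHS
  have hlow : ∀ r ∈ {r : ℝ≥0∞ | ∃ g h : Ω → ℝ, f = g + h ∧ Integrable g μ ∧ MemLp h ⊤ μ ∧
      r = eLpNorm g 1 μ + eLpNorm h ⊤ μ}, RHS ≤ r := by
    rintro r ⟨g, h, hfgh, hg, hh, rfl⟩
    exact lower_bound μ f hfgh hg hh
  refine le_antisymm ?_ (le_sInf hlow)
  -- upper bound: truncate `f` at level `c = f*(1)`
  set c : ℝ := decRearrange μ f 1 with hc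
  have hc0 : 0 ≤ c := decRearrange_nonneg μ f 1
  have hS1 : (dSet μ f (ENNReal.ofReal 1)).Nonempty :=
    dSet_nonempty μ f hdecomp (by norm_num)
  have hdfc : dfun μ f c ≤ 1 := by
    calc dfun μ f c = dfun μ f (sInf (dSet μ f (ENNReal.ofReal 1))) := by
          rw [hc, decRearrange_eq]
      _ ≤ ENNReal.ofReal 1 := dfun_sInf_le μ f hS1
      _ = 1 := ENNReal.ofReal_one
  have hdf_gt : ∀ s : ℝ, 0 ≤ s → s < c → 1 < dfun μ f s := by
    intro s hs0 hsc
    by_contra hle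
    push_neg at hle
    have hcs : c ≤ s := by
      rw [hc, decRearrange_eq]
      exact csInf_le (bddBelow_dSet μ f _) ⟨hs0, by rw [ENNReal.ofReal_one]; exact hle⟩
    linarith
  set h₀ : Ω → ℝ := fun x => max (min (f x) c) (-c) with hh₀
  set g₀ : Ω → ℝ := fun x => f x - h₀ x with hg₀
  have hfgh₀ : f = g₀ + h₀ := funext fun x => by
    show f x = (f x - h₀ x) + h₀ x; ring
  have hh₀m : Measurable h₀ := (hmeas.min measurable_const).max measurable_const
  have hg₀m : Measurable g₀ := hmeas.sub hh₀m
  have hh₀b : ∀ x, |h₀ x| ≤ c := fun x =>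
    abs_le.mpr ⟨le_max_right _ _, max_le (min_le_right _ _) (by linarith)⟩
  have hg₀abs : ∀ x, |g₀ x| = max (|f x| - c) 0 := by
    intro x
    show |f x - max (min (f x) c) (-c)| = max (|f x| - c) 0
    rcases le_total (f x) c with h1 | h1
    · rcases le_total (-c) (f x) with h2 | h2
      · have hfc : |f x| ≤ c := abs_le.mpr ⟨h2, h1⟩
        rw [min_eq_left h1, max_eq_left h2, sub_self, abs_zero, max_eq_right (by linarith)]
      · have hfx0 : f x ≤ 0 := by linarith
        rw [min_eq_left h1, max_eq_right h2, abs_of_nonpos hfx0,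
          abs_of_nonpos (by linarith : f x - -c ≤ 0), max_eq_left (by linarith)]
        ring
    · have hfx0 : 0 ≤ f x := le_trans hc0 h1
      rw [min_eq_right h1, max_eq_left (by linarith : -c ≤ c), abs_of_nonneg hfx0,
        abs_of_nonneg (by linarith : 0 ≤ f x - c), max_eq_left (by linarith)]
  have hh₀mem : MemLp h₀ ⊤ μ := memLp_top_of_bound hh₀m.aestronglyMeasurable c
    (ae_of_all _ fun x => by rw [Real.norm_eq_abs]; exact hh₀b x)
  have hh₀norm : eLpNorm h₀ ⊤ μ ≤ ENNReal.ofReal c := by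
    rw [eLpNorm_exponent_top]
    exact eLpNormEssSup_le_of_ae_bound
      (ae_of_all _ fun x => by rw [Real.norm_eq_abs]; exact hh₀b x)
  have hgset : ∀ s : ℝ, 0 < s → {x | s < |g₀ x|} = {x | s + c < |f x|} := by
    intro s hs
    ext x
    simp only [Set.mem_setOf_eq, hg₀abs x, lt_max_iff]
    constructor
    · rintro (hx | hx)
      · linarith
      · linarith
    · intro hx; left; linarith
  have hg₀norm : eLpNorm g₀ 1 μ = ∫⁻ u in Set.Ioi c, dfun μ f u := by
    rw [eLpNorm_one_eq_lintegral_enorm,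
      show (∫⁻ x, ‖g₀ x‖ₑ ∂μ) = ∫⁻ x, ENNReal.ofReal |g₀ x| ∂μ from
        lintegral_congr fun x => Real.enorm_eq_ofReal_abs (g₀ x),
      lintegral_eq_lintegral_meas_lt μ (ae_of_all _ fun x => abs_nonneg (g₀ x))
        hg₀m.abs.aemeasurable]
    have e1 : (∫⁻ s in Set.Ioi (0:ℝ), μ {x | s < |g₀ x|})
        = ∫⁻ s in Set.Ioi (0:ℝ), dfun μ f (s + c) := by
      refine setLIntegral_congr_fun measurableSet_Ioi (fun s hs => ?_)
      rw [show μ {x | s < |g₀ x|} = μ {x | s + c < |f x|} from by rw [hgset s hs]]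
      rfl
    have hpre : ((· + c) ⁻¹' Set.Ioi c : Set ℝ) = Set.Ioi 0 := by ext u; simp
    have hmap : volume.restrict (Set.Ioi c)
        = Measure.map (· + c) (volume.restrict (Set.Ioi (0:ℝ))) := by
      conv_lhs => rw [← map_add_right_eq_self volume c]
      rw [Measure.restrict_map (measurable_add_const c) measurableSet_Ioi, hpre]
    rw [e1, hmap, lintegral_map (dfun_measurable μ f) (measurable_add_const c)]
  have hmin_eq : ∀ u ∈ Set.Ioi c, min (dfun μ f u) 1 = dfun μ f u := fun u hu =>
    min_eq_left ((dfun_antitone μ f (le_of_lt hu)).trans hdfc)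
  have hIoic : (∫⁻ u in Set.Ioi c, dfun μ f u) = ∫⁻ u in Set.Ioi c, min (dfun μ f u) 1 :=
    setLIntegral_congr_fun measurableSet_Ioi (fun u hu => (hmin_eq u hu).symm)
  have hRfin : RHS ≠ ∞ := by
    obtain ⟨g, h, hfgh, hg, hh⟩ := hdecomp
    have hlb := lower_bound μ f hfgh hg hh
    have hgfin : eLpNorm g 1 μ ≠ ∞ := ((memLp_one_iff_integrable.mpr hg).2).ne
    exact (hlb.trans_lt (ENNReal.add_lt_top.mpr
      ⟨lt_top_iff_ne_top.mpr hgfin, hh.2⟩)).ne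
  have hg₀fin : eLpNorm g₀ 1 μ < ∞ := by
    rw [hg₀norm, hIoic]
    calc (∫⁻ u in Set.Ioi c, min (dfun μ f u) 1)
        ≤ ∫⁻ u in Set.Ioi (0:ℝ), min (dfun μ f u) 1 :=
          lintegral_mono_set (Set.Ioi_subset_Ioi hc0)
      _ < ∞ := lt_top_iff_ne_top.mpr hRfin
  have hg₀int : Integrable g₀ μ :=
    memLp_one_iff_integrable.mp ⟨hg₀m.aestronglyMeasurable, hg₀fin⟩
  have hsplit2 : RHS = (∫⁻ s in Set.Ioc (0:ℝ) c, min (dfun μ f s) 1)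
      + ∫⁻ u in Set.Ioi c, min (dfun μ f u) 1 := by
    rw [hRHS, ← lintegral_union measurableSet_Ioi Set.Ioc_disjoint_Ioi_same,
      Set.Ioc_union_Ioi_eq_Ioi hc0]
  have hpiece1 : (∫⁻ s in Set.Ioc (0:ℝ) c, min (dfun μ f s) 1) = ENNReal.ofReal c := by
    rw [← Measure.restrict_congr_set Ioo_ae_eq_Ioc,
      setLIntegral_congr_fun measurableSet_Ioo (fun s hs =>
        min_eq_right (le_of_lt (hdf_gt s (le_of_lt hs.1) hs.2))),
      setLIntegral_one, Real.volume_Ioo, sub_zero]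
  have hmem : eLpNorm g₀ 1 μ + eLpNorm h₀ ⊤ μ ∈ {r : ℝ≥0∞ | ∃ g h : Ω → ℝ,
      f = g + h ∧ Integrable g μ ∧ MemLp h ⊤ μ ∧ r = eLpNorm g 1 μ + eLpNorm h ⊤ μ} :=
    ⟨g₀, h₀, hfgh₀, hg₀int, hh₀mem, rfl⟩
  refine (sInf_le hmem).trans ?_
  calc eLpNorm g₀ 1 μ + eLpNorm h₀ ⊤ μ
      ≤ (∫⁻ u in Set.Ioi c, min (dfun μ f u) 1) + ENNReal.ofReal c := by
        refine add_le_add ?_ hh₀norm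
        rw [hg₀norm, hIoic]
    _ = RHS := by rw [hsplit2, hpiece1, add_comm]
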